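/- For every 321-avoiding permutation π ∈ T_{n-1} (n ≥ 2), exactly one of the following holds: either ldes(π) = π⁻¹(n-1) < n-1 (when n-1 is not the last digit of π), or ldes(π) < π⁻¹(n-1) = n-1 (when n-1 is the last digit of π). -/

import Mathlib

open Finset

/-- A permutation is 321-avoiding if it has no decreasing subsequence of length 3. -/
def Avoids321 {n : ℕ} (π : Equiv.Perm (Fin n)) : Prop :=
  ¬ ∃ i j k : Fin n, i < j ∧ j < k ∧ π k < π j ∧ π j < π i

instance {n : ℕ} : DecidablePred (Avoids321 (n := n)) := fun π =>
  decidable_of_iff (¬ ∃ i j k : Fin n, i < j ∧ j < k ∧ π k < π j ∧ π j < π i) Iff.rfl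

/-- The set `T_n` of 321-avoiding permutations of order `n`. -/
def Tset (n : ℕ) : Finset (Equiv.Perm (Fin n)) :=
  Finset.univ.filter (fun π => Avoids321 π)

/-- The value `π(i)` in one-based notation: positions `1,…,n`, values `1,…,n`. -/
def pval {n : ℕ} (π : Equiv.Perm (Fin n)) (i : ℕ) : ℕ :=
  if h : i - 1 < n then (π ⟨i - 1, h⟩ : ℕ) + 1 else 0

/-- The descent set `Des(π) = {1 ≤ i ≤ n-1 : π(i) > π(i+1)}` (one-based). -/
def desSet {n : ℕ} (π : Equiv.Perm (Fin n)) : Finset ℕ :=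
  (Finset.Icc 1 (n - 1)).filter (fun i => pval π (i + 1) < pval π i)

/-- The last descent of `π` (0 for the identity). -/
def ldes {n : ℕ} (π : Equiv.Perm (Fin n)) : ℕ := (desSet π).sup id

/-- `lind(π) = π⁻¹(n)`, the (one-based) position of the letter `n` in `π`. -/
def lind {n : ℕ} (π : Equiv.Perm (Fin n)) : ℕ := pval π.symm n

/-- The inversion number of `π`. -/
def invNum {n : ℕ} (π : Equiv.Perm (Fin n)) : ℕ :=
  (Finset.univ.filter (fun q : Fin n × Fin n => q.1 < q.2 ∧ π q.2 < π q.1)).card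

/-- A ±1 sequence of length `2n` (`true` = +1) is a Dyck path if it has `n` up
steps and every prefix has at least as many up steps as down steps. -/
def IsDyckPred (n : ℕ) (p : Fin (2 * n) → Bool) : Prop :=
  (Finset.univ.filter (fun i => p i = true)).card = n ∧
  ∀ k ≤ 2 * n,
    k ≤ 2 * (Finset.univ.filter (fun i : Fin (2 * n) => (i : ℕ) < k ∧ p i = true)).card

instance (n : ℕ) : DecidablePred (IsDyckPred n) := fun p => by
  unfold IsDyckPred; infer_instance

/-- The set `P_n` of Dyck paths of length `2n`. -/
def DyckPath (n : ℕ) : Type := { p : Fin (2 * n) → Bool // IsDyckPred n p }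

instance (n : ℕ) : Fintype (DyckPath n) := by unfold DyckPath; infer_instance

/-- The `i`-th step of the path, one-based; `true` = +1, `false` = -1. -/
def pstep {n : ℕ} (p : DyckPath n) (i : ℕ) : Bool :=
  if h : i - 1 < 2 * n then p.1 ⟨i - 1, h⟩ else false

/-- `Des(p) = {1 ≤ i ≤ n-1 : p_i = +1, p_{i+1} = -1}`. -/
def pathDes {n : ℕ} (p : DyckPath n) : Finset ℕ :=
  (Finset.Icc 1 (n - 1)).filter (fun i => pstep p i = true ∧ pstep p (i + 1) = false)

/-- `Des(p⁻¹) = {1 ≤ i ≤ n-1 : p_{2n-i} = +1, p_{2n-i+1} = -1}`. -/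
def pathDesInv {n : ℕ} (p : DyckPath n) : Finset ℕ :=
  (Finset.Icc 1 (n - 1)).filter
    (fun i => pstep p (2 * n - i) = true ∧ pstep p (2 * n - i + 1) = false)

/-- `ldes(p) = max{1 ≤ i ≤ n-1 : p_i = +1, p_{i+1} = -1}` (0 if none). -/
def pathLdes {n : ℕ} (p : DyckPath n) : ℕ := (pathDes p).sup id

/-- `lind(p) = max{1 ≤ i ≤ n : p_i = +1, p_{i+1} = -1}` (0 if none). -/
def pathLind {n : ℕ} (p : DyckPath n) : ℕ :=
  ((Finset.Icc 1 n).filter (fun i => pstep p i = true ∧ pstep p (i + 1) = false)).sup id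

/-- `tail(p) = 2n - max{i : p_i = +1, p_{i+1} = -1}`, the number of consecutive
down steps at the end of `p`. -/
def pathTail {n : ℕ} (p : DyckPath n) : ℕ :=
  2 * n -
    ((Finset.Icc 1 (2 * n - 1)).filter
      (fun i => pstep p i = true ∧ pstep p (i + 1) = false)).sup id

lemma pval_succ {m : ℕ} (π : Equiv.Perm (Fin m)) (a : ℕ) (h : a < m) :
    pval π (a + 1) = (π ⟨a, h⟩ : ℕ) + 1 := by
  simp [pval, h]

theorem ldes_lind_dichotomy (m : ℕ) (hm : 1 ≤ m)
    (π : Equiv.Perm (Fin m)) (hπ : Avoids321 π) :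
    Xor' (ldes π = lind π ∧ lind π < m) (ldes π < lind π ∧ lind π = m) ∧
      (pval π m = m ↔ lind π = m) := by
  have hm' : m - 1 < m := Nat.sub_lt hm one_pos
  set jf : Fin m := π.symm ⟨m - 1, hm'⟩ with hjf
  have hmax : π jf = ⟨m - 1, hm'⟩ := Equiv.apply_symm_apply π _
  have hlind : lind π = (jf : ℕ) + 1 := by
    simp only [lind, pval, dif_pos hm']
    rfl
  have hldes_le : ldes π ≤ m - 1 := by
    apply Finset.sup_le
    intro i hi
    simp only [desSet, Finset.mem_filter, Finset.mem_Icc] at hi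
    exact hi.1.2
  have hpvm : pval π m = (π ⟨m - 1, hm'⟩ : ℕ) + 1 := by
    simp [pval, hm']
  have hsecond : pval π m = m ↔ lind π = m := by
    rw [hlind, hpvm]
    constructor
    · intro h
      have h1 : π ⟨m - 1, hm'⟩ = ⟨m - 1, hm'⟩ :=
        Fin.ext (show (π ⟨m - 1, hm'⟩ : ℕ) = m - 1 by omega)
      have h2 : jf = ⟨m - 1, hm'⟩ := by
        rw [hjf]
        nth_rewrite 1 [← h1]
        exact Equiv.symm_apply_apply π _
      rw [h2]
      show m - 1 + 1 = m
      omega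
    · intro h
      have h2 : jf = ⟨m - 1, hm'⟩ := Fin.ext (show (jf : ℕ) = m - 1 by omega)
      have h3 : π ⟨m - 1, hm'⟩ = ⟨m - 1, hm'⟩ := by
        rw [← h2, hmax]
        exact h2.symm
      rw [h3]
      show m - 1 + 1 = m
      omega
  refine ⟨?_, hsecond⟩
  rcases eq_or_lt_of_le (Nat.succ_le_of_lt jf.isLt) with heq | hlt
  · -- lind = m
    right
    constructor
    · exact ⟨by omega, by omega⟩
    · intro h; omega
  · -- lind < m
    have hjv : (jf : ℕ) + 1 < m := hlt
    have hmem : (jf : ℕ) + 1 ∈ desSet π := by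
      simp only [desSet, Finset.mem_filter, Finset.mem_Icc]
      refine ⟨⟨by omega, by omega⟩, ?_⟩
      rw [pval_succ π (jf : ℕ) jf.isLt, pval_succ π ((jf : ℕ) + 1) hjv]
      have e1 : (⟨(jf : ℕ), jf.isLt⟩ : Fin m) = jf := Fin.eta _ _
      rw [e1, hmax]
      have hne : (⟨(jf : ℕ) + 1, hjv⟩ : Fin m) ≠ jf := by
        intro h; have := congrArg Fin.val h; simp at this
      have : π ⟨(jf : ℕ) + 1, hjv⟩ ≠ ⟨m - 1, hm'⟩ := by
        intro h; exact hne (π.injective (h.trans hmax.symm))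
      have hv : (π ⟨(jf : ℕ) + 1, hjv⟩ : ℕ) ≠ m - 1 := by
        intro h; exact this (Fin.ext h)
      have := (π ⟨(jf : ℕ) + 1, hjv⟩).isLt
      simp only []
      omega
    have hge : (jf : ℕ) + 1 ≤ ldes π := Finset.le_sup (f := id) hmem
    have hle : ldes π ≤ (jf : ℕ) + 1 := by
      apply Finset.sup_le
      intro i hi
      simp only [desSet, Finset.mem_filter, Finset.mem_Icc] at hi
      obtain ⟨⟨h1i, him⟩, hdesc⟩ := hi
      by_contra hcon
      push_neg at hcon
      simp only [id] at hcon
      have ha : i - 1 < m := by omega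
      have hb : i < m := by omega
      have hpi : pval π i = (π ⟨i - 1, ha⟩ : ℕ) + 1 := by simp [pval, ha]
      rw [pval_succ π i hb, hpi] at hdesc
      have hblt : π ⟨i, hb⟩ < π ⟨i - 1, ha⟩ := by
        rw [Fin.lt_def]; omega
      have hane : (⟨i - 1, ha⟩ : Fin m) ≠ jf := by
        intro h; have := congrArg Fin.val h; simp at this; omega
      have h2 : π ⟨i - 1, ha⟩ ≠ ⟨m - 1, hm'⟩ := by
        intro h; exact hane (π.injective (h.trans hmax.symm))
      have h3 : (π ⟨i - 1, ha⟩ : ℕ) < m - 1 := by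
        have h4 : (π ⟨i - 1, ha⟩ : ℕ) ≠ m - 1 := fun h => h2 (Fin.ext h)
        have := (π ⟨i - 1, ha⟩).isLt
        omega
      exact hπ ⟨jf, ⟨i - 1, ha⟩, ⟨i, hb⟩,
        by rw [Fin.lt_def]; simp; omega,
        by rw [Fin.lt_def]; simp; omega,
        hblt,
        by rw [Fin.lt_def, hmax]; simpa using h3⟩
    left
    constructor
    · exact ⟨by omega, by omega⟩
    · intro h; omega
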